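/- Suppose the family of projections is finite, say p_1, …, p_w. Let u be a unitary operator on H with u − 1 compact, and let C ≥ 0 be such that ‖u·P(u*·y) − P(y)‖ ≤ C for every compact y with ‖y‖ ≤ 1. Then for every index i ∈ {0, 1, …, w} one has ‖u p_i u* − p_i‖ ≤ 2wC. -/

import Mathlib

open ContinuousLinearMap in
lemma rankone_compact {H : Type*} [NormedAddCommGroup H] [InnerProductSpace ℂ H]
    (e : H) : IsCompactOperator ⇑((innerSL ℂ e).smulRight e) := by
  refine (isCompactOperator_iff_exists_mem_nhds_image_subset_compact _).2
    ⟨Metric.closedBall 0 1, Metric.closedBall_mem_nhds 0 one_pos,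
     (· • e) '' Metric.closedBall (0:ℂ) (‖e‖),
     ((isCompact_closedBall _ _).image (by continuity)), ?_⟩
  rintro - ⟨y, hy, rfl⟩
  refine ⟨inner ℂ e y, ?_, rfl⟩
  simp only [Metric.mem_closedBall, dist_zero_right] at *
  calc ‖(inner ℂ e y : ℂ)‖ ≤ ‖e‖ * ‖y‖ := norm_inner_le_norm e y
  _ ≤ ‖e‖ * 1 := by gcongr
  _ = ‖e‖ := mul_one _

lemma key_absorb {H : Type*} [NormedAddCommGroup H] [InnerProductSpace ℂ H]
    (C : ℝ) (hC : 0 ≤ C) (A b : H →L[ℂ] H)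
    (h : ∀ z : H →L[ℂ] H, IsCompactOperator ⇑z → ‖z‖ ≤ 1 → ‖A * z * b‖ ≤ C) :
    ‖A * b‖ ≤ C := by
  rw [ContinuousLinearMap.opNorm_le_iff hC]
  intro x
  by_cases hbx : b x = 0
  · simp only [ContinuousLinearMap.mul_apply, hbx, map_zero, norm_zero]
    positivity
  · set v := b x with hv
    set e : H := ((‖v‖:ℂ))⁻¹ • v with he
    have hne : ‖e‖ = 1 := by
      rw [he, norm_smul, norm_inv, Complex.norm_real, norm_norm,
        inv_mul_cancel₀ (norm_ne_zero_iff.2 hbx)]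
    set z := (innerSL ℂ e).smulRight e with hz
    have hzc : IsCompactOperator ⇑z := rankone_compact e
    have hzn : ‖z‖ ≤ 1 := by
      refine (ContinuousLinearMap.opNorm_le_bound _ zero_le_one ?_)
      intro y
      rw [one_mul]
      calc ‖z y‖ = ‖(inner ℂ e y : ℂ)‖ * ‖e‖ := by simp [hz, norm_smul]
      _ ≤ ‖e‖ * ‖y‖ * ‖e‖ := by gcongr; exact norm_inner_le_norm e y
      _ = ‖y‖ := by rw [hne]; ring
    have hzv : z v = v := by
      have : (inner ℂ e v : ℂ) = (‖v‖ : ℂ) := by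
        rw [he, inner_smul_left, inner_self_eq_norm_sq_to_K]
        simp only [map_inv₀, Complex.conj_ofReal]
        rw [sq]
        have hv0 : (‖v‖:ℂ) ≠ 0 := by exact_mod_cast norm_ne_zero_iff.2 hbx
        field_simp
        rfl
      simp only [hz, ContinuousLinearMap.smulRight_apply, innerSL_apply_apply, this]
      simp only [he, smul_smul]
      rw [mul_inv_cancel₀ (show (‖v‖:ℂ) ≠ 0 by exact_mod_cast norm_ne_zero_iff.2 hbx)]
      simp
    calc ‖(A * b) x‖ = ‖(A * z * b) x‖ := by
          simp only [ContinuousLinearMap.mul_apply, ← hv, hzv]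
    _ ≤ ‖A * z * b‖ * ‖x‖ := (A * z * b).le_opNorm x
    _ ≤ C * ‖x‖ := by gcongr; exact h z hzc hzn

/-- For a finite family `p 1, …, p w` of mutually orthogonal projections with
pinching `P y = ∑ i, p i * y * p i`, if `u` is a unitary with `u - 1` compact and `C ≥ 0`
satisfies `‖u * P (u* * y) - P y‖ ≤ C` for all compact `y` with `‖y‖ ≤ 1`, then
`‖u * p i * u* - p i‖ ≤ 2wC` for every `i ∈ {0, 1, …, w}` (index `0` standing for the
complementary projection `p₀ = 1 - ∑ i, p i`). -/
theorem pinching_orbit_finite_family_estimate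
    {H : Type*} [NormedAddCommGroup H] [InnerProductSpace ℂ H] [CompleteSpace H]
    [TopologicalSpace.SeparableSpace H]
    (hinf : ¬ FiniteDimensional ℂ H)
    (w : ℕ) (p : Fin w → H →L[ℂ] H)
    (hsa : ∀ i, IsSelfAdjoint (p i))
    (hidem : ∀ i, p i * p i = p i)
    (horth : ∀ i j, i ≠ j → p i * p j = 0)
    (u : H →L[ℂ] H) (hu1 : star u * u = 1) (hu2 : u * star u = 1)
    (hucpt : IsCompactOperator ⇑(u - 1))
    (C : ℝ) (hC : 0 ≤ C)
    (hbound : ∀ y : H →L[ℂ] H, IsCompactOperator ⇑y → ‖y‖ ≤ 1 →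
      ‖u * (∑ i, p i * (star u * y) * p i) - ∑ i, p i * y * p i‖ ≤ C) :
    (∀ i, ‖u * p i * star u - p i‖ ≤ 2 * w * C) ∧
    ‖u * (1 - ∑ i, p i) * star u - (1 - ∑ i, p i)‖ ≤ 2 * w * C := by
  have hnt : Nontrivial H := by
    by_contra h
    rw [not_nontrivial_iff_subsingleton] at h
    exact hinf (Module.Finite.of_basis (Module.Basis.empty H (ι := Empty)))
  -- norms of projections
  have hp_norm : ∀ j, ‖p j‖ ≤ 1 := by
    intro j
    have h1 : ‖star (p j) * p j‖ = ‖p j‖ * ‖p j‖ := CStarRing.norm_star_mul_self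
    rw [(hsa j).star_eq, hidem j] at h1
    nlinarith [norm_nonneg (p j)]
  have hu_norm : ‖u‖ = 1 := by
    have h1 : ‖star u * u‖ = ‖u‖ * ‖u‖ := CStarRing.norm_star_mul_self
    rw [hu1, norm_one] at h1
    nlinarith [norm_nonneg u]
  have hsu_norm : ‖star u‖ = 1 := by rw [norm_star, hu_norm]
  have hxu : ∀ x : H →L[ℂ] H, ‖x * star u‖ = ‖x‖ := by
    intro x
    refine le_antisymm ?_ ?_
    · calc ‖x * star u‖ ≤ ‖x‖ * ‖star u‖ := norm_mul_le _ _
      _ = ‖x‖ := by rw [hsu_norm, mul_one]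
    · calc ‖x‖ = ‖x * star u * u‖ := by rw [mul_assoc, hu1, mul_one]
      _ ≤ ‖x * star u‖ * ‖u‖ := norm_mul_le _ _
      _ = ‖x * star u‖ := by rw [hu_norm, mul_one]
  -- multiplying the pinching sum by p j on the right
  have hsum : ∀ (y : H →L[ℂ] H) (j : Fin w),
      (∑ i, p i * y * p i) * p j = p j * y * p j := by
    intro y j
    rw [Finset.sum_mul, Finset.sum_eq_single j]
    · rw [mul_assoc, hidem j]
    · intro i _ hij
      rw [mul_assoc, horth i j hij, mul_zero]
    · intro h; exact absurd (Finset.mem_univ j) h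
  -- step 1 : ‖(u p_j u* - p_j) p_j‖ ≤ C
  have step1 : ∀ j, ‖(u * p j * star u - p j) * p j‖ ≤ C := by
    intro j
    apply key_absorb C hC
    intro z hzc hzn
    have hb := hbound z hzc hzn
    have heq : (u * (∑ i, p i * (star u * z) * p i) - ∑ i, p i * z * p i) * p j
        = (u * p j * star u - p j) * z * p j := by
      have h1 : (u * (∑ i, p i * (star u * z) * p i) - ∑ i, p i * z * p i) * p j
          = u * ((∑ i, p i * (star u * z) * p i) * p j) - (∑ i, p i * z * p i) * p j := by
        noncomm_ring
      rw [h1, hsum (star u * z) j, hsum z j]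
      noncomm_ring
    rw [← heq]
    calc ‖_ * p j‖ ≤ ‖_‖ * ‖p j‖ := norm_mul_le _ _
    _ ≤ C * 1 := by
        apply mul_le_mul hb (hp_norm j) (norm_nonneg _) hC
    _ = C := mul_one C
  -- step 2 : ‖(u p_j - p_j u) p_j‖ ≤ C
  have step2 : ∀ j, ‖(u * p j - p j * u) * p j‖ ≤ C := by
    intro j
    apply key_absorb C hC
    intro z hzc hzn
    have hcz : IsCompactOperator ⇑(u * z) := by
      have := hzc.continuous_comp u.continuous
      exact this
    have hnz : ‖u * z‖ ≤ 1 := by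
      calc ‖u * z‖ ≤ ‖u‖ * ‖z‖ := norm_mul_le _ _
      _ ≤ 1 := by rw [hu_norm, one_mul]; exact hzn
    have hb := hbound (u * z) hcz hnz
    have hz1 : star u * (u * z) = z := by rw [← mul_assoc, hu1, one_mul]
    rw [hz1] at hb
    have heq : (u * (∑ i, p i * z * p i) - ∑ i, p i * (u * z) * p i) * p j
        = (u * p j - p j * u) * z * p j := by
      have h1 : (u * (∑ i, p i * z * p i) - ∑ i, p i * (u * z) * p i) * p j
          = u * ((∑ i, p i * z * p i) * p j) - (∑ i, p i * (u * z) * p i) * p j := by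
        noncomm_ring
      rw [h1, hsum z j, hsum (u * z) j]
      noncomm_ring
    rw [← heq]
    calc ‖_ * p j‖ ≤ ‖_‖ * ‖p j‖ := norm_mul_le _ _
    _ ≤ C * 1 := mul_le_mul hb (hp_norm j) (norm_nonneg _) hC
    _ = C := mul_one C
  -- main per-index estimate
  have main : ∀ j, ‖u * p j * star u - p j‖ ≤ 2 * C := by
    intro j
    set q := u * p j * star u with hq
    have hdec : q - p j = (q - p j) * p j + q * (1 - p j) := by
      rw [hq]; rw [sub_mul, mul_sub, mul_one, mul_assoc _ (star u) (p j)]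
      rw [show u * p j * (star u * p j) - p j * p j + (u * p j * star u
        - u * p j * (star u * p j)) = u * p j * star u - p j * p j by abel, hidem j]
    have h2 : ‖q * (1 - p j)‖ ≤ C := by
      have hstar : star (q * (1 - p j)) = (1 - p j) * q := by
        rw [star_mul, star_sub, star_one, (hsa j).star_eq, hq, star_mul, star_mul,
          star_star, (hsa j).star_eq, mul_assoc]
      have hns : ‖q * (1 - p j)‖ = ‖(1 - p j) * q‖ := by
        rw [← hstar, norm_star]
      rw [hns, hq, show (1 - p j) * (u * p j * star u) = ((1 - p j) * (u * p j)) * star u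
        by noncomm_ring, hxu]
      have : (1 - p j) * (u * p j) = (u * p j - p j * u) * p j := by
        rw [sub_mul, sub_mul, one_mul, mul_assoc, mul_assoc, hidem j]
      rw [this]
      exact step2 j
    calc ‖q - p j‖ = ‖(q - p j) * p j + q * (1 - p j)‖ := by rw [← hdec]
    _ ≤ ‖(q - p j) * p j‖ + ‖q * (1 - p j)‖ := norm_add_le _ _
    _ ≤ C + C := add_le_add (step1 j) h2
    _ = 2 * C := by ring
  constructor
  · intro i
    have hw : 1 ≤ (w : ℝ) := by exact_mod_cast i.pos
    calc ‖u * p i * star u - p i‖ ≤ 2 * C := main i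
    _ ≤ 2 * w * C := by nlinarith
  · have heq : u * (1 - ∑ i, p i) * star u - (1 - ∑ i, p i)
        = -(∑ i, (u * p i * star u - p i)) := by
      have h1 : u * (1 - ∑ i, p i) * star u = 1 - ∑ i, u * p i * star u := by
        rw [mul_sub, mul_one, sub_mul, hu2, Finset.mul_sum, Finset.sum_mul]
      rw [h1, Finset.sum_sub_distrib]
      abel
    rw [heq, norm_neg]
    calc ‖∑ i, (u * p i * star u - p i)‖ ≤ ∑ i : Fin w, ‖u * p i * star u - p i‖ :=
          norm_sum_le _ _
    _ ≤ ∑ _i : Fin w, 2 * C := Finset.sum_le_sum fun i _ => main i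
    _ = 2 * w * C := by rw [Finset.sum_const, Finset.card_univ, Fintype.card_fin]; push_cast; ring
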